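/- Let G = (ZMod 2) × (ZMod 2) and let (V, ρ) be a finite-dimensional real representation of G. Then for every g ∈ G, the determinant of the linear map ρ(g) : V → V equals the product, over all subgroups H of G of cardinality 2 with g ∉ H, of (−1)^(dim_ℝ V^H − dim_ℝ V^G). -/

import Mathlib

open scoped Classical

noncomputable instance subgroupFintype {G : Type*} [Group G] [Finite G] :
    Fintype (Subgroup G) :=
  haveI : Finite (Subgroup G) :=
    Finite.of_injective (fun H => (H : Set G)) fun _ _ h => SetLike.coe_injective h
  Fintype.ofFinite _

/-- The subspace of vectors fixed by all elements of a subgroup `H`. -/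
noncomputable def fixedSubmodule {k G V : Type*} [CommSemiring k] [Group G] [AddCommMonoid V]
    [Module k V] (ρ : Representation k G V) (H : Subgroup G) : Submodule k V :=
  { carrier := {v | ∀ g : H, (ρ.comp H.subtype) g v = v}
    zero_mem' := fun g => map_zero _
    add_mem' := fun hv hw g => (map_add _ _ _).trans (congrArg₂ (· + ·) (hv g) (hw g))
    smul_mem' := fun r v hv g => (LinearMap.map_smul _ r v).trans (congrArg (r • ·) (hv g)) }

/- ### Auxiliary linear algebra -/

section KerLemmas

variable {V : Type} [AddCommGroup V] [Module ℝ V]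

private lemma aux_mem_ker_sub_one (A : Module.End ℝ V) (v : V) :
    v ∈ LinearMap.ker (A - 1) ↔ A v = v := by
  simp [LinearMap.mem_ker, LinearMap.sub_apply, sub_eq_zero]

private lemma aux_mem_ker_add_one (A : Module.End ℝ V) (v : V) :
    v ∈ LinearMap.ker (A + 1) ↔ A v = -v := by
  simp [LinearMap.mem_ker, LinearMap.add_apply, add_eq_zero_iff_eq_neg]

private lemma aux_invol_apply {A : Module.End ℝ V} (hA : A * A = 1) (v : V) :
    A (A v) = v := by
  have := DFunLike.congr_fun hA v
  simpa [Module.End.mul_apply] using this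

private lemma aux_isCompl {A : Module.End ℝ V} (hA : A * A = 1) :
    IsCompl (LinearMap.ker (A - 1)) (LinearMap.ker (A + 1)) := by
  constructor
  · rw [disjoint_iff, eq_bot_iff]
    intro v hv
    obtain ⟨h1, h2⟩ := Submodule.mem_inf.1 hv
    rw [aux_mem_ker_sub_one] at h1
    rw [aux_mem_ker_add_one] at h2
    have hvv : v + v = 0 := eq_neg_iff_add_eq_zero.mp (h1.symm.trans h2)
    have h2v : (2 : ℝ) • v = 0 := by rw [two_smul]; exact hvv
    have hv0 : v = 0 := (smul_eq_zero.mp h2v).resolve_left (by norm_num)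
    simp [hv0]
  · rw [codisjoint_iff, eq_top_iff]
    intro v _
    have hdecomp : ((1:ℝ)/2) • (v + A v) + ((1:ℝ)/2) • (v - A v) = v := by
      rw [← smul_add]
      have : v + A v + (v - A v) = (2 : ℝ) • v := by rw [two_smul]; abel
      rw [this, smul_smul]
      norm_num
    rw [← hdecomp]
    refine Submodule.add_mem_sup (Submodule.smul_mem _ _ ?_) (Submodule.smul_mem _ _ ?_)
    · rw [aux_mem_ker_sub_one, map_add, aux_invol_apply hA]; abel
    · rw [aux_mem_ker_add_one, map_sub, aux_invol_apply hA]; abel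

end KerLemmas

section LinAlg

variable {V : Type} [AddCommGroup V] [Module ℝ V] [FiniteDimensional ℝ V]

private lemma aux_finrank_split (P N W : Submodule ℝ V) (hd : Disjoint P N)
    (hspan : ∀ v ∈ W, ∃ p ∈ W ⊓ P, ∃ n ∈ W ⊓ N, v = p + n) :
    Module.finrank ℝ W =
      Module.finrank ℝ ↥(W ⊓ P) + Module.finrank ℝ ↥(W ⊓ N) := by
  have hsup : (W ⊓ P) ⊔ (W ⊓ N) = W := by
    refine le_antisymm (sup_le inf_le_left inf_le_left) ?_
    intro v hv
    obtain ⟨p, hp, n, hn, rfl⟩ := hspan v hv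
    exact Submodule.add_mem_sup hp hn
  have hdisj : (W ⊓ P) ⊓ (W ⊓ N) = ⊥ := by
    rw [eq_bot_iff]
    refine le_trans ?_ (disjoint_iff.mp hd).le
    exact le_inf (le_trans inf_le_left inf_le_right) (le_trans inf_le_right inf_le_right)
  have h := Submodule.finrank_sup_add_finrank_inf_eq (W ⊓ P) (W ⊓ N)
  rw [hsup, hdisj] at h
  have hb : Module.finrank ℝ (⊥ : Submodule ℝ V) = 0 := finrank_bot ℝ V
  omega

private lemma aux_det_prodMap {M N : Type*} [AddCommGroup M] [Module ℝ M]
    [FiniteDimensional ℝ M] [AddCommGroup N] [Module ℝ N] [FiniteDimensional ℝ N]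
    (f : Module.End ℝ M) (g : Module.End ℝ N) :
    LinearMap.det (f.prodMap g) = LinearMap.det f * LinearMap.det g := by
  let b₁ := Module.finBasis ℝ M
  let b₂ := Module.finBasis ℝ N
  rw [← LinearMap.det_toMatrix (b₁.prod b₂), LinearMap.toMatrix_prodMap,
    Matrix.det_fromBlocks_zero₂₁, LinearMap.det_toMatrix, LinearMap.det_toMatrix]

private lemma aux_det_invol (A : Module.End ℝ V) (P N : Submodule ℝ V) (h : IsCompl P N)
    (hP : ∀ v ∈ P, A v = v) (hN : ∀ v ∈ N, A v = -v) :
    LinearMap.det A = (-1 : ℝ) ^ Module.finrank ℝ N := by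
  let e := Submodule.prodEquivOfIsCompl P N h
  have hAeq : A = (e : P × N →ₗ[ℝ] V) ∘ₗ
      ((LinearMap.id (R := ℝ) (M := P)).prodMap (-LinearMap.id)) ∘ₗ
        (e.symm : V →ₗ[ℝ] P × N) := by
    apply LinearMap.ext
    intro v
    have he : ∀ y : ↥P × ↥N, e y = (y.1 : V) + (y.2 : V) := fun y =>
      Submodule.coe_prodEquivOfIsCompl' P N h y
    set x := e.symm v with hx
    have hv : v = (x.1 : V) + (x.2 : V) := by
      rw [← he x, hx, e.apply_symm_apply]
    have lhs : A v = (x.1 : V) - (x.2 : V) := by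
      rw [hv, map_add, hP _ x.1.2, hN _ x.2.2, sub_eq_add_neg]
    have rhs : ((LinearMap.id (R := ℝ) (M := P)).prodMap (-LinearMap.id)) x
        = (x.1, -x.2) := by
      simp [LinearMap.prodMap_apply]
    simp only [LinearMap.comp_apply, LinearEquiv.coe_coe, ← hx, rhs, lhs]
    rw [he (x.1, -x.2)]
    simp [sub_eq_add_neg]
  calc LinearMap.det A
      = LinearMap.det (M := ↥P × ↥N) ((LinearMap.id (R := ℝ) (M := P)).prodMap
          (-LinearMap.id)) := by
        rw [hAeq]
        exact LinearMap.det_conj _ e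
    _ = (-1 : ℝ) ^ Module.finrank ℝ N := by
        rw [aux_det_prodMap, LinearMap.det_id, one_mul]
        have hneg : (-LinearMap.id : Module.End ℝ N) = (-1 : ℝ) • LinearMap.id := by
          ext w; simp
        rw [hneg, LinearMap.det_smul, LinearMap.det_id, mul_one]

/-- The key linear-algebra identity for two commuting involutions. -/
private lemma aux_key (A B : Module.End ℝ V) (hA : A * A = 1) (hB : B * B = 1)
    (hc : A * B = B * A) :
    LinearMap.det (A * B) =
      (-1 : ℝ) ^ (Module.finrank ℝ (LinearMap.ker (A - 1))
          - Module.finrank ℝ ↥(LinearMap.ker (A - 1) ⊓ LinearMap.ker (B - 1))) *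
      (-1 : ℝ) ^ (Module.finrank ℝ (LinearMap.ker (B - 1))
          - Module.finrank ℝ ↥(LinearMap.ker (A - 1) ⊓ LinearMap.ker (B - 1))) := by
  have hcomm : ∀ v, A (B v) = B (A v) := by
    intro v
    have := DFunLike.congr_fun hc v
    simpa [Module.End.mul_apply] using this
  set Pa := LinearMap.ker (A - 1) with hPa
  set Na := LinearMap.ker (A + 1) with hNa
  set Pb := LinearMap.ker (B - 1) with hPb
  set Nb := LinearMap.ker (B + 1) with hNb
  -- split Pa along B-eigenspaces
  have hq : Module.finrank ℝ Pa =
      Module.finrank ℝ ↥(Pa ⊓ Pb) + Module.finrank ℝ ↥(Pa ⊓ Nb) := by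
    refine aux_finrank_split Pb Nb Pa (aux_isCompl hB).disjoint ?_
    intro v hv
    rw [hPa, aux_mem_ker_sub_one] at hv
    refine ⟨((1:ℝ)/2) • (v + B v), ?_, ((1:ℝ)/2) • (v - B v), ?_, ?_⟩
    · refine Submodule.mem_inf.2 ⟨Submodule.smul_mem _ _ ?_, Submodule.smul_mem _ _ ?_⟩
      · rw [hPa, aux_mem_ker_sub_one, map_add, hv, hcomm, hv]
      · rw [hPb, aux_mem_ker_sub_one, map_add, aux_invol_apply hB]; abel
    · refine Submodule.mem_inf.2 ⟨Submodule.smul_mem _ _ ?_, Submodule.smul_mem _ _ ?_⟩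
      · rw [hPa, aux_mem_ker_sub_one, map_sub, hv, hcomm, hv]
      · rw [hNb, aux_mem_ker_add_one, map_sub, aux_invol_apply hB]; abel
    · rw [← smul_add]
      have h2 : v + B v + (v - B v) = (2 : ℝ) • v := by rw [two_smul]; abel
      rw [h2, smul_smul]; norm_num
  -- split Pb along A-eigenspaces
  have hr : Module.finrank ℝ Pb =
      Module.finrank ℝ ↥(Pb ⊓ Pa) + Module.finrank ℝ ↥(Pb ⊓ Na) := by
    refine aux_finrank_split Pa Na Pb (aux_isCompl hA).disjoint ?_
    intro v hv
    rw [hPb, aux_mem_ker_sub_one] at hv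
    refine ⟨((1:ℝ)/2) • (v + A v), ?_, ((1:ℝ)/2) • (v - A v), ?_, ?_⟩
    · refine Submodule.mem_inf.2 ⟨Submodule.smul_mem _ _ ?_, Submodule.smul_mem _ _ ?_⟩
      · rw [hPb, aux_mem_ker_sub_one, map_add, hv, ← hcomm, hv]
      · rw [hPa, aux_mem_ker_sub_one, map_add, aux_invol_apply hA]; abel
    · refine Submodule.mem_inf.2 ⟨Submodule.smul_mem _ _ ?_, Submodule.smul_mem _ _ ?_⟩
      · rw [hPb, aux_mem_ker_sub_one, map_sub, hv, ← hcomm, hv]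
      · rw [hNa, aux_mem_ker_add_one, map_sub, aux_invol_apply hA]; abel
    · rw [← smul_add]
      have h2 : v + A v + (v - A v) = (2 : ℝ) • v := by rw [two_smul]; abel
      rw [h2, smul_smul]; norm_num
  -- A*B is an involution
  have hABinv : (A * B) * (A * B) = 1 := by
    calc (A * B) * (A * B) = A * (B * A) * B := by noncomm_ring
      _ = A * (A * B) * B := by rw [hc]
      _ = (A * A) * (B * B) := by noncomm_ring
      _ = 1 := by rw [hA, hB, one_mul]
  have hdet : LinearMap.det (A * B) =
      (-1 : ℝ) ^ Module.finrank ℝ (LinearMap.ker ((A * B) + 1)) := by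
    refine aux_det_invol (A * B) _ _ (aux_isCompl hABinv) ?_ ?_
    · intro v hv; rwa [aux_mem_ker_sub_one] at hv
    · intro v hv; rwa [aux_mem_ker_add_one] at hv
  -- split ker (A*B + 1) along A-eigenspaces
  have hWsplit : Module.finrank ℝ (LinearMap.ker ((A * B) + 1)) =
      Module.finrank ℝ ↥(LinearMap.ker ((A * B) + 1) ⊓ Pa)
        + Module.finrank ℝ ↥(LinearMap.ker ((A * B) + 1) ⊓ Na) := by
    refine aux_finrank_split Pa Na _ (aux_isCompl hA).disjoint ?_
    intro v hv
    rw [aux_mem_ker_add_one] at hv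
    have hv' : A (B v) = -v := by
      rw [← hv]; simp [Module.End.mul_apply]
    have hBAv : B v = - A v := by
      calc B v = A (A (B v)) := (aux_invol_apply hA _).symm
        _ = A (-v) := by rw [hv']
        _ = - A v := by rw [map_neg]
    refine ⟨((1:ℝ)/2) • (v + A v), ?_, ((1:ℝ)/2) • (v - A v), ?_, ?_⟩
    · refine Submodule.mem_inf.2 ⟨Submodule.smul_mem _ _ ?_, Submodule.smul_mem _ _ ?_⟩
      · rw [aux_mem_ker_add_one]
        have heq : (A * B) (v + A v) = A (B v) + A (B (A v)) := by
          simp [Module.End.mul_apply, map_add]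
        rw [heq, hv', ← hcomm, aux_invol_apply hA, hBAv]
        abel
      · rw [hPa, aux_mem_ker_sub_one, map_add, aux_invol_apply hA]; abel
    · refine Submodule.mem_inf.2 ⟨Submodule.smul_mem _ _ ?_, Submodule.smul_mem _ _ ?_⟩
      · rw [aux_mem_ker_add_one]
        have heq : (A * B) (v - A v) = A (B v) - A (B (A v)) := by
          simp [Module.End.mul_apply, map_sub]
        rw [heq, hv', ← hcomm, aux_invol_apply hA, hBAv]
        abel
      · rw [hNa, aux_mem_ker_add_one, map_sub, aux_invol_apply hA]; abel
    · rw [← smul_add]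
      have h2 : v + A v + (v - A v) = (2 : ℝ) • v := by rw [two_smul]; abel
      rw [h2, smul_smul]; norm_num
  -- identify the two pieces
  have hWPa : LinearMap.ker ((A * B) + 1) ⊓ Pa = Pa ⊓ Nb := by
    ext v
    simp only [Submodule.mem_inf]
    constructor
    · rintro ⟨h1, h2⟩
      rw [aux_mem_ker_add_one] at h1
      rw [hPa, aux_mem_ker_sub_one] at h2
      refine ⟨by rwa [hPa, aux_mem_ker_sub_one], ?_⟩
      rw [hNb, aux_mem_ker_add_one]
      have hAB : A (B v) = -v := by rw [← h1]; simp [Module.End.mul_apply]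
      rwa [hcomm, h2] at hAB
    · rintro ⟨h1, h2⟩
      rw [hPa, aux_mem_ker_sub_one] at h1
      rw [hNb, aux_mem_ker_add_one] at h2
      refine ⟨?_, by rwa [hPa, aux_mem_ker_sub_one]⟩
      rw [aux_mem_ker_add_one]
      have heq : (A * B) v = A (B v) := by simp [Module.End.mul_apply]
      rw [heq, h2, map_neg, h1]
  have hWNa : LinearMap.ker ((A * B) + 1) ⊓ Na = Pb ⊓ Na := by
    ext v
    simp only [Submodule.mem_inf]
    constructor
    · rintro ⟨h1, h2⟩
      rw [aux_mem_ker_add_one] at h1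
      rw [hNa, aux_mem_ker_add_one] at h2
      refine ⟨?_, by rwa [hNa, aux_mem_ker_add_one]⟩
      rw [hPb, aux_mem_ker_sub_one]
      have hAB : A (B v) = -v := by rw [← h1]; simp [Module.End.mul_apply]
      have hBv : B v = A (A (B v)) := (aux_invol_apply hA _).symm
      rw [hAB, map_neg, h2] at hBv
      simpa using hBv
    · rintro ⟨h1, h2⟩
      rw [hPb, aux_mem_ker_sub_one] at h1
      rw [hNa, aux_mem_ker_add_one] at h2
      refine ⟨?_, by rwa [hNa, aux_mem_ker_add_one]⟩
      rw [aux_mem_ker_add_one]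
      have heq : (A * B) v = A (B v) := by simp [Module.End.mul_apply]
      rw [heq, h1, h2]
  -- put everything together
  rw [hdet, hWsplit, hWPa, hWNa]
  have e1 : Module.finrank ℝ Pa - Module.finrank ℝ ↥(Pa ⊓ Pb)
      = Module.finrank ℝ ↥(Pa ⊓ Nb) := by omega
  have e2 : Module.finrank ℝ Pb - Module.finrank ℝ ↥(Pa ⊓ Pb)
      = Module.finrank ℝ ↥(Pb ⊓ Na) := by
    rw [inf_comm Pb Pa] at hr
    omega
  rw [e1, e2, ← pow_add]

end LinAlg

/- ### Group theory -/

section GroupAux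

private lemma aux_mem_zpowers_iff {G : Type*} [CommGroup G] {x : G} (hx : x * x = 1) (y : G) :
    y ∈ Subgroup.zpowers x ↔ y = 1 ∨ y = x := by
  constructor
  · intro hy
    obtain ⟨k, hk⟩ := Subgroup.mem_zpowers_iff.mp hy
    rcases Int.even_or_odd k with ⟨m, rfl⟩ | ⟨m, rfl⟩
    · left; rw [← hk, zpow_add, ← mul_zpow, hx, one_zpow]
    · right; rw [← hk, zpow_add, zpow_one, two_mul, zpow_add, ← mul_zpow, hx, one_zpow,
        one_mul]
  · rintro (rfl | rfl)
    · exact Subgroup.one_mem _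
    · exact Subgroup.mem_zpowers _

private lemma aux_card_zpowers {G : Type*} [CommGroup G] {x : G} (hx : x * x = 1)
    (hx1 : x ≠ 1) : Nat.card (Subgroup.zpowers x) = 2 := by
  rw [Nat.card_zpowers]
  exact orderOf_eq_prime (by rw [pow_two, hx]) hx1

private lemma aux_card_two_subgroup {G : Type*} [CommGroup G] [Finite G]
    {H : Subgroup G} (hsq : ∀ x : G, x * x = 1) (hH : Nat.card H = 2) :
    ∃ x : G, x ∈ H ∧ x ≠ 1 ∧ H = Subgroup.zpowers x := by
  obtain ⟨b, hb, hbu⟩ := (Nat.card_eq_two_iff' (1 : H)).mp hH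
  refine ⟨(b : G), b.2, fun h => hb (Subtype.ext h), ?_⟩
  refine le_antisymm ?_ (Subgroup.zpowers_le.mpr b.2)
  intro y hy
  rw [aux_mem_zpowers_iff (hsq (b : G))]
  by_cases hy1 : y = 1
  · left; exact hy1
  · right
    have hyb : (⟨y, hy⟩ : H) = b :=
      hbu ⟨y, hy⟩ (fun h => hy1 (by simpa [Subtype.ext_iff] using h))
    exact congrArg Subtype.val hyb

end GroupAux

/- ### Fixed submodules -/

section FixedAux

variable {V : Type} [AddCommGroup V] [Module ℝ V]

private lemma aux_fixed_zpowers {G : Type*} [CommGroup G]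
    (ρ : Representation ℝ G V) {x : G} (hx : x * x = 1) :
    fixedSubmodule ρ (Subgroup.zpowers x) = LinearMap.ker (ρ x - 1) := by
  ext v
  show (∀ g : Subgroup.zpowers x, (ρ.comp (Subgroup.zpowers x).subtype) g v = v) ↔ _
  rw [aux_mem_ker_sub_one]
  constructor
  · intro h
    have := h ⟨x, Subgroup.mem_zpowers x⟩
    simpa [MonoidHom.comp_apply, Subgroup.coe_subtype] using this
  · intro h g
    rcases (aux_mem_zpowers_iff hx (g : G)).mp g.2 with h1 | h1 <;>
      simp [MonoidHom.comp_apply, Subgroup.coe_subtype, h1, map_one, h]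

private lemma aux_fixed_top {G : Type*} [CommGroup G]
    (ρ : Representation ℝ G V) (h₁ h₂ : G)
    (hgen : ∀ x : G, x = 1 ∨ x = h₁ ∨ x = h₂ ∨ x = h₁ * h₂) :
    fixedSubmodule ρ ⊤ = LinearMap.ker (ρ h₁ - 1) ⊓ LinearMap.ker (ρ h₂ - 1) := by
  ext v
  show (∀ g : (⊤ : Subgroup G), (ρ.comp (⊤ : Subgroup G).subtype) g v = v) ↔ _
  rw [Submodule.mem_inf,
    aux_mem_ker_sub_one, aux_mem_ker_sub_one]
  constructor
  · intro h
    constructor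
    · have := h ⟨h₁, trivial⟩
      simpa [MonoidHom.comp_apply, Subgroup.coe_subtype] using this
    · have := h ⟨h₂, trivial⟩
      simpa [MonoidHom.comp_apply, Subgroup.coe_subtype] using this
  · rintro ⟨ha, hb⟩ g
    rcases hgen (g : G) with h1 | h1 | h1 | h1 <;>
      simp [MonoidHom.comp_apply, Subgroup.coe_subtype, h1, map_one, map_mul,
        Module.End.mul_apply, ha, hb]

end FixedAux

/- ### The main case: g ≠ 1 -/

private lemma aux_main (V : Type) [AddCommGroup V] [Module ℝ V] [FiniteDimensional ℝ V]
    (ρ : Representation ℝ (Multiplicative (ZMod 2 × ZMod 2)) V)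
    (g h₁ h₂ : Multiplicative (ZMod 2 × ZMod 2))
    (hg : g = h₁ * h₂) (h1ne : h₁ ≠ 1) (h2ne : h₂ ≠ 1)
    (hg1 : g ≠ h₁) (hg2 : g ≠ h₂) (hgn1 : g ≠ 1) (h12 : h₁ ≠ h₂)
    (hgen : ∀ x : Multiplicative (ZMod 2 × ZMod 2),
      x = 1 ∨ x = h₁ ∨ x = h₂ ∨ x = h₁ * h₂) :
    LinearMap.det (ρ g) =
      ∏ H ∈ Finset.univ.filter
        (fun H : Subgroup (Multiplicative (ZMod 2 × ZMod 2)) =>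
          Nat.card H = 2 ∧ g ∉ H),
        (-1 : ℝ) ^ (Module.finrank ℝ (fixedSubmodule ρ H)
          - Module.finrank ℝ (fixedSubmodule ρ ⊤)) := by
  have hsq : ∀ x : Multiplicative (ZMod 2 × ZMod 2), x * x = 1 := by decide
  have hzne : Subgroup.zpowers h₁ ≠ Subgroup.zpowers h₂ := by
    intro e
    have hmem : h₁ ∈ Subgroup.zpowers h₂ := e ▸ Subgroup.mem_zpowers h₁
    rcases (aux_mem_zpowers_iff (hsq h₂) h₁).mp hmem with h | h
    exacts [h1ne h, h12 h]
  have hfilter : Finset.univ.filter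
      (fun H : Subgroup (Multiplicative (ZMod 2 × ZMod 2)) =>
        Nat.card H = 2 ∧ g ∉ H)
      = {Subgroup.zpowers h₁, Subgroup.zpowers h₂} := by
    ext H
    simp only [Finset.mem_filter, Finset.mem_univ, true_and, Finset.mem_insert,
      Finset.mem_singleton]
    constructor
    · rintro ⟨hc, hgH⟩
      obtain ⟨x, hxH, hx1, rfl⟩ := aux_card_two_subgroup hsq hc
      have hxg : x ≠ g := by rintro rfl; exact hgH (Subgroup.mem_zpowers x)
      rcases hgen x with h | h | h | h
      · exact absurd h hx1
      · left; rw [h]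
      · right; rw [h]
      · exact absurd (h.trans hg.symm) hxg
    · rintro (rfl | rfl)
      · refine ⟨aux_card_zpowers (hsq h₁) h1ne, ?_⟩
        rw [aux_mem_zpowers_iff (hsq h₁)]
        rintro (h | h)
        exacts [hgn1 h, hg1 h]
      · refine ⟨aux_card_zpowers (hsq h₂) h2ne, ?_⟩
        rw [aux_mem_zpowers_iff (hsq h₂)]
        rintro (h | h)
        exacts [hgn1 h, hg2 h]
  rw [hfilter, Finset.prod_insert (by simpa using hzne), Finset.prod_singleton,
    aux_fixed_zpowers ρ (hsq h₁), aux_fixed_zpowers ρ (hsq h₂),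
    aux_fixed_top ρ h₁ h₂ hgen, hg, map_mul]
  exact aux_key (ρ h₁) (ρ h₂)
    (by rw [← map_mul, hsq h₁, map_one])
    (by rw [← map_mul, hsq h₂, map_one])
    (by rw [← map_mul, ← map_mul, mul_comm h₁ h₂])

/-- For a real representation of `C₂ × C₂`, the determinant of `ρ(g)` equals the
product over the order-2 subgroups `H` not containing `g` of
`(−1)^(dim V^H − dim V^G)`. -/
theorem det_eq_orientation_behaviour_C2C2
    (V : Type) [AddCommGroup V] [Module ℝ V] [FiniteDimensional ℝ V]
    (ρ : Representation ℝ (Multiplicative (ZMod 2 × ZMod 2)) V)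
    (g : Multiplicative (ZMod 2 × ZMod 2)) :
    LinearMap.det (ρ g) =
      ∏ H ∈ Finset.univ.filter
        (fun H : Subgroup (Multiplicative (ZMod 2 × ZMod 2)) =>
          Nat.card H = 2 ∧ g ∉ H),
        (-1 : ℝ) ^ (Module.finrank ℝ (fixedSubmodule ρ H)
          - Module.finrank ℝ (fixedSubmodule ρ ⊤)) := by
  have hclass : ∀ x : Multiplicative (ZMod 2 × ZMod 2),
      x = 1 ∨ x = Multiplicative.ofAdd (1, 0) ∨ x = Multiplicative.ofAdd (0, 1) ∨
        x = Multiplicative.ofAdd (1, 1) := by decide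
  rcases hclass g with rfl | rfl | rfl | rfl
  · have hfilter : Finset.univ.filter
        (fun H : Subgroup (Multiplicative (ZMod 2 × ZMod 2)) =>
          Nat.card H = 2 ∧ (1 : Multiplicative (ZMod 2 × ZMod 2)) ∉ H) = ∅ := by
      rw [Finset.filter_eq_empty_iff]
      intro H _ hp
      exact hp.2 H.one_mem
    rw [hfilter, Finset.prod_empty, map_one, Module.End.one_eq_id, LinearMap.det_id]
  · exact aux_main V ρ _ (Multiplicative.ofAdd (0, 1)) (Multiplicative.ofAdd (1, 1))
      (by decide) (by decide) (by decide) (by decide) (by decide) (by decide) (by decide)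
      (by decide)
  · exact aux_main V ρ _ (Multiplicative.ofAdd (1, 0)) (Multiplicative.ofAdd (1, 1))
      (by decide) (by decide) (by decide) (by decide) (by decide) (by decide) (by decide)
      (by decide)
  · exact aux_main V ρ _ (Multiplicative.ofAdd (1, 0)) (Multiplicative.ofAdd (0, 1))
      (by decide) (by decide) (by decide) (by decide) (by decide) (by decide) (by decide)
      (by decide)
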